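/- If the spectral radius of ΛP is strictly less than 1, then the matrix W = (I − ΛP)^{-1}(I − Λ) is entrywise nonnegative and row-stochastic, i.e., W·𝟙 = 𝟙 where 𝟙 is the all-ones vector. Consequently, W maps the cube [0,1]^N into itself. -/

import Mathlib

open Matrix

/-- The spectral radius of a square real matrix: the supremum of the moduli of its
complex eigenvalues. -/
noncomputable def specRad {N : ℕ} (M : Matrix (Fin N) (Fin N) ℝ) : ENNReal :=
  spectralRadius ℂ (M.map (algebraMap ℝ ℂ))

open Filter Topology
open scoped ENNReal NNReal

section aux
attribute [local instance] Matrix.linftyOpNormedRing Matrix.linftyOpNormedAlgebra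

lemma aux_main {N : ℕ} (hN : 1 ≤ N) (A : Matrix (Fin N) (Fin N) ℝ)
    (hnn : ∀ i j, 0 ≤ A i j) (hρ : specRad A < 1) :
    IsUnit (1 - A).det ∧ ∀ i j, Tendsto (fun n => (A ^ n) i j) atTop (𝓝 0) := by
  haveI : Nonempty (Fin N) := ⟨⟨0, hN⟩⟩
  haveI : CompleteSpace (Matrix (Fin N) (Fin N) ℂ) := FiniteDimensional.complete ℂ _
  set f := algebraMap ℝ ℂ with hf
  set M := A.map f with hM
  have hmap : ∀ B : Matrix (Fin N) (Fin N) ℝ, B.map f = f.mapMatrix B := fun _ => rfl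
  have hpow : ∀ n : ℕ, M ^ n = (A ^ n).map f := by
    intro n
    rw [hM, hmap, hmap, ← map_pow]
  have hApow_nn : ∀ (n : ℕ) i j, 0 ≤ (A ^ n) i j := by
    intro n
    induction n with
    | zero => intro i j; rw [pow_zero]; by_cases h : i = j <;>
        simp [Matrix.one_apply, h]
    | succ n ih =>
      intro i j
      rw [pow_succ, Matrix.mul_apply]
      exact Finset.sum_nonneg fun k _ => mul_nonneg (ih i k) (hnn k j)
  constructor
  · have h1 : (1 : ℂ) ∈ resolventSet ℂ M := by
      apply spectrum.mem_resolventSet_of_spectralRadius_lt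
      simpa using (show spectralRadius ℂ M < 1 from hρ)
    rw [spectrum.mem_resolventSet_iff] at h1
    rw [_root_.map_one] at h1
    have hdet : IsUnit (1 - M).det := (Matrix.isUnit_iff_isUnit_det _).mp h1
    have h2 : 1 - M = ((1 : Matrix (Fin N) (Fin N) ℝ) - A).map f := by
      ext i j
      by_cases h : i = j <;>
        simp [hM, Matrix.map_apply, Matrix.sub_apply, Matrix.one_apply, h]
    rw [h2, hmap, ← RingHom.map_det] at hdet
    rw [isUnit_iff_ne_zero] at hdet ⊢
    intro h; exact hdet (by rw [h, map_zero])
  · obtain ⟨r, hr1, hr2⟩ := ENNReal.lt_iff_exists_nnreal_btwn.mp hρ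
    rw [ENNReal.coe_lt_one_iff] at hr2
    have hgel := spectrum.pow_nnnorm_pow_one_div_tendsto_nhds_spectralRadius M
    have hev : ∀ᶠ n : ℕ in atTop, (‖M ^ n‖₊ : ℝ≥0∞) ^ (1 / (n : ℝ)) < (r : ℝ≥0∞) :=
      hgel.eventually_lt_const hr1
    have hbd : ∀ᶠ n : ℕ in atTop, ∀ i j, (A ^ n) i j ≤ (r : ℝ) ^ n := by
      filter_upwards [hev, eventually_ge_atTop 1] with n hn hn1 i j
      have hnpos : (0:ℝ) < (n:ℝ) := by exact_mod_cast hn1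
      have h1 : ‖M ^ n‖₊ < r ^ n := by
        have h := ENNReal.rpow_lt_rpow hn hnpos
        rw [← ENNReal.rpow_mul, one_div, inv_mul_cancel₀ hnpos.ne',
          ENNReal.rpow_one, ENNReal.rpow_natCast, ← ENNReal.coe_pow] at h
        exact_mod_cast h
      have h2 : ‖(M ^ n) i j‖₊ ≤ ‖M ^ n‖₊ := by
        rw [Matrix.linfty_opNNNorm_def]
        exact le_trans (Finset.single_le_sum (f := fun k => ‖(M ^ n) i k‖₊)
          (fun k _ => zero_le) (Finset.mem_univ j)) (Finset.le_sup (f := fun i => ∑ j, ‖(M ^ n) i j‖₊) (Finset.mem_univ i))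
      have h3 : ‖(M ^ n) i j‖ = (A ^ n) i j := by
        rw [hpow]
        show ‖(f ((A ^ n) i j) : ℂ)‖ = _
        rw [hf, Complex.coe_algebraMap, Complex.norm_real,
          Real.norm_of_nonneg (hApow_nn n i j)]
      calc (A ^ n) i j = ‖(M ^ n) i j‖ := h3.symm
        _ ≤ ‖M ^ n‖ := h2
        _ ≤ (r : ℝ) ^ n := by
            have := h1.le
            rw [← NNReal.coe_le_coe] at this
            simpa using this
    intro i j
    apply tendsto_of_tendsto_of_tendsto_of_le_of_le'
      (tendsto_const_nhds) (tendsto_pow_atTop_nhds_zero_of_lt_one r.coe_nonneg hr2)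
    · filter_upwards with n; exact hApow_nn n i j
    · filter_upwards [hbd] with n hn; exact hn i j

end aux

/-- If `ρ(Λ P) < 1`, then `W = (I - Λ P)⁻¹ (I - Λ)` is entrywise nonnegative and
row-stochastic (`W 𝟙 = 𝟙`); consequently `W` maps `[0,1]^N` into itself. -/
theorem stmt1 (N : ℕ) (hN : 1 ≤ N)
    (P Λ : Matrix (Fin N) (Fin N) ℝ)
    (hPnn : ∀ i j, 0 ≤ P i j)
    (hProw : ∀ i, ∑ j, P i j = 1)
    (hΛdiag : Λ.IsDiag)
    (hΛ : ∀ i, Λ i i ∈ Set.Icc (0 : ℝ) 1)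
    (hρ : specRad (Λ * P) < 1) :
    (∀ i j, 0 ≤ ((1 - Λ * P)⁻¹ * (1 - Λ)) i j) ∧
    ((1 - Λ * P)⁻¹ * (1 - Λ)) *ᵥ (fun _ => (1 : ℝ)) = (fun _ => (1 : ℝ)) ∧
    (∀ x : Fin N → ℝ, (∀ i, x i ∈ Set.Icc (0 : ℝ) 1) →
      ∀ i, (((1 - Λ * P)⁻¹ * (1 - Λ)) *ᵥ x) i ∈ Set.Icc (0 : ℝ) 1) := by
  have hA : ∀ i j, (Λ * P) i j = Λ i i * P i j := by
    intro i j
    rw [Matrix.mul_apply]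
    rw [Finset.sum_eq_single i]
    · exact fun k _ hk => by rw [hΛdiag (Ne.symm hk), zero_mul]
    · exact fun h => absurd (Finset.mem_univ i) h
  have hnn : ∀ i j, 0 ≤ (Λ * P) i j := fun i j => by
    rw [hA]; exact mul_nonneg (hΛ i).1 (hPnn i j)
  obtain ⟨hdet, htend⟩ := aux_main hN (Λ * P) hnn hρ
  set A := Λ * P with hAdef
  set B := (1 : Matrix (Fin N) (Fin N) ℝ) - A with hB
  have hBB : B⁻¹ * B = 1 := Matrix.nonsing_inv_mul B hdet
  have hBB' : B * B⁻¹ = 1 := Matrix.mul_nonsing_inv B hdet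
  -- nonnegativity of B⁻¹
  have hApow_nn : ∀ (n : ℕ) i j, 0 ≤ (A ^ n) i j := by
    intro n
    induction n with
    | zero => intro i j; rw [pow_zero]; by_cases h : i = j <;>
        simp [Matrix.one_apply, h]
    | succ n ih =>
      intro i j
      rw [pow_succ, Matrix.mul_apply]
      exact Finset.sum_nonneg fun k _ => mul_nonneg (ih i k) (hnn k j)
  have hS : ∀ n : ℕ, (∑ k ∈ Finset.range n, A ^ k) = B⁻¹ - A ^ n * B⁻¹ := by
    intro n
    have h1 : (∑ k ∈ Finset.range n, A ^ k) * B = 1 - A ^ n := by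
      have h := geom_sum_mul A n
      have h2 : (∑ k ∈ Finset.range n, A ^ k) * B
          = -((∑ k ∈ Finset.range n, A ^ k) * (A - 1)) := by
        rw [hB]; noncomm_ring
      rw [h2, h, neg_sub]
    calc (∑ k ∈ Finset.range n, A ^ k)
        = ((∑ k ∈ Finset.range n, A ^ k) * B) * B⁻¹ := by
          rw [mul_assoc, hBB', mul_one]
      _ = (1 - A ^ n) * B⁻¹ := by rw [h1]
      _ = B⁻¹ - A ^ n * B⁻¹ := by rw [sub_mul, one_mul]
  have hBinv_nn : ∀ i j, 0 ≤ B⁻¹ i j := by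
    intro i j
    have hlim : Tendsto (fun n => B⁻¹ i j - (A ^ n * B⁻¹) i j) atTop (𝓝 (B⁻¹ i j)) := by
      have h0 : Tendsto (fun n => (A ^ n * B⁻¹) i j) atTop (𝓝 0) := by
        have : ∀ n, (A ^ n * B⁻¹) i j = ∑ k, (A ^ n) i k * B⁻¹ k j := fun n =>
          Matrix.mul_apply
        simp only [this]
        have := tendsto_finset_sum (Finset.univ : Finset (Fin N))
          (fun k _ => (htend i k).mul_const (B⁻¹ k j))
        simpa using this
      simpa using (tendsto_const_nhds (x := B⁻¹ i j)).sub h0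
    refine ge_of_tendsto hlim ?_
    filter_upwards with n
    have := hS n
    have h2 : B⁻¹ i j - (A ^ n * B⁻¹) i j = (∑ k ∈ Finset.range n, A ^ k) i j := by
      rw [this]; simp [Matrix.sub_apply]
    rw [h2, Matrix.sum_apply]
    exact Finset.sum_nonneg fun k _ => hApow_nn k i j
  have hW : ∀ i j, (B⁻¹ * (1 - Λ)) i j = B⁻¹ i j * (1 - Λ j j) := by
    intro i j
    rw [Matrix.mul_apply, Finset.sum_eq_single j]
    · rw [Matrix.sub_apply, Matrix.one_apply_eq]
    · intro k _ hk
      rw [Matrix.sub_apply, Matrix.one_apply_ne hk, hΛdiag hk, sub_zero, mul_zero]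
    · exact fun h => absurd (Finset.mem_univ j) h
  have hWnn : ∀ i j, 0 ≤ (B⁻¹ * (1 - Λ)) i j := fun i j => by
    rw [hW]; exact mul_nonneg (hBinv_nn i j) (sub_nonneg.mpr (hΛ j).2)
  have hsum1 : ∀ i, ∑ j, (1 : Matrix (Fin N) (Fin N) ℝ) i j = 1 := by
    intro i
    rw [Finset.sum_eq_single i]
    · exact Matrix.one_apply_eq i
    · exact fun k _ hk => Matrix.one_apply_ne (Ne.symm hk)
    · exact fun h => absurd (Finset.mem_univ i) h
  have hrow : B *ᵥ (fun _ => (1 : ℝ)) = (1 - Λ) *ᵥ (fun _ => (1 : ℝ)) := by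
    funext i
    simp only [Matrix.mulVec, dotProduct, mul_one]
    have h1 : ∑ j, B i j = 1 - Λ i i := by
      have : ∀ j, B i j = (1 : Matrix (Fin N) (Fin N) ℝ) i j - A i j := fun j => rfl
      simp only [this, Finset.sum_sub_distrib, hsum1 i]
      congr 1
      calc ∑ j, A i j = ∑ j, Λ i i * P i j := by simp only [hA]
        _ = Λ i i * ∑ j, P i j := by rw [Finset.mul_sum]
        _ = Λ i i := by rw [hProw i, mul_one]
    have h2 : ∑ j, (1 - Λ) i j = 1 - Λ i i := by
      have : ∀ j, (1 - Λ) i j = (1 : Matrix (Fin N) (Fin N) ℝ) i j - Λ i j := fun j => rfl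
      simp only [this, Finset.sum_sub_distrib, hsum1 i]
      congr 1
      rw [Finset.sum_eq_single i]
      · exact fun k _ hk => hΛdiag (Ne.symm hk)
      · exact fun h => absurd (Finset.mem_univ i) h
    rw [h1, h2]
  have hW1 : (B⁻¹ * (1 - Λ)) *ᵥ (fun _ => (1 : ℝ)) = (fun _ => (1 : ℝ)) := by
    rw [← Matrix.mulVec_mulVec, ← hrow, Matrix.mulVec_mulVec, hBB, Matrix.one_mulVec]
  refine ⟨hWnn, hW1, ?_⟩
  intro x hx i
  constructor
  · simp only [Matrix.mulVec, dotProduct]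
    exact Finset.sum_nonneg fun j _ => mul_nonneg (hWnn i j) (hx j).1
  · have h := congrFun hW1 i
    simp only [Matrix.mulVec, dotProduct] at h ⊢
    calc ∑ j, (B⁻¹ * (1 - Λ)) i j * x j
        ≤ ∑ j, (B⁻¹ * (1 - Λ)) i j * 1 := by
          refine Finset.sum_le_sum fun j _ => ?_
          exact mul_le_mul_of_nonneg_left (hx j).2 (hWnn i j)
      _ = 1 := h
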